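/- A constant-free propositional formula φ over a set S of atoms is a classical tautology (satisfied by every assignment v : S → {t, f}) if and only if the fuzzy evaluation satisfies ŵ(φ) ≥ 1/2 for every w : S → [0,1]. -/

import Mathlib

/-- Propositional formulas over a set `S` of atoms, with real constants and the
connectives `∧`, `∨`, `¬`. -/
inductive Fml (S : Type) where
  | atom : S → Fml S
  | const : ℝ → Fml S
  | conj : Fml S → Fml S → Fml S
  | disj : Fml S → Fml S → Fml S
  | neg : Fml S → Fml S

/-- Fuzzy evaluation of a formula under a real-valued assignment of the atoms:
`∧` is min, `∨` is max, `¬` is `1 - ·`, constants evaluate to themselves. -/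
def feval {S : Type} (w : S → ℝ) : Fml S → ℝ
  | .atom a => w a
  | .const c => c
  | .conj φ ψ => min (feval w φ) (feval w ψ)
  | .disj φ ψ => max (feval w φ) (feval w ψ)
  | .neg φ => 1 - feval w φ

open scoped Classical in
/-- Classical two-valued evaluation of a formula under a Boolean assignment of
the atoms (the constant `1` is identified with true, `0` with false). -/
noncomputable def ceval {S : Type} (v : S → Bool) : Fml S → Bool
  | .atom a => v a
  | .const c => if 1 ≤ c then true else false
  | .conj φ ψ => ceval v φ && ceval v ψ
  | .disj φ ψ => ceval v φ || ceval v ψ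
  | .neg φ => ! ceval v φ

/-- A formula is constant-free if it contains no constants. -/
def ConstFree {S : Type} : Fml S → Prop
  | .atom _ => True
  | .const _ => False
  | .conj φ ψ => ConstFree φ ∧ ConstFree ψ
  | .disj φ ψ => ConstFree φ ∧ ConstFree ψ
  | .neg φ => ConstFree φ

lemma feval_indicator {S : Type} (v : S → Bool) (φ : Fml S) (h : ConstFree φ) :
    feval (fun s => if v s then (1:ℝ) else 0) φ = if ceval v φ then 1 else 0 := by
  induction φ with
  | atom a => simp [feval, ceval]; congr
  | const c => exact absurd h (by simp [ConstFree])
  | conj φ ψ ih1 ih2 =>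
      obtain ⟨h1, h2⟩ := h
      simp only [feval, ceval, ih1 h1, ih2 h2]
      rcases Bool.eq_false_or_eq_true (ceval v φ) with e1 | e1 <;>
        rcases Bool.eq_false_or_eq_true (ceval v ψ) with e2 | e2 <;>
        simp [e1, e2]
  | disj φ ψ ih1 ih2 =>
      obtain ⟨h1, h2⟩ := h
      simp only [feval, ceval, ih1 h1, ih2 h2]
      rcases Bool.eq_false_or_eq_true (ceval v φ) with e1 | e1 <;>
        rcases Bool.eq_false_or_eq_true (ceval v ψ) with e2 | e2 <;>
        simp [e1, e2]
  | neg φ ih =>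
      simp only [feval, ceval, ih h]
      rcases Bool.eq_false_or_eq_true (ceval v φ) with e | e <;> simp [e]

lemma feval_half {S : Type} (w : S → ℝ) (φ : Fml S) (h : ConstFree φ) :
    (ceval (fun s => decide ((1:ℝ)/2 ≤ w s)) φ = true → 1/2 ≤ feval w φ) ∧
    (ceval (fun s => decide ((1:ℝ)/2 ≤ w s)) φ = false → feval w φ ≤ 1/2) := by
  induction φ with
  | atom a =>
      constructor <;> intro hc <;> simp [ceval] at hc
      · simpa [feval] using hc
      · simpa [feval] using hc.le
  | const c => exact absurd h (by simp [ConstFree])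
  | conj φ ψ ih1 ih2 =>
      obtain ⟨h1, h2⟩ := h
      obtain ⟨a1, b1⟩ := ih1 h1; obtain ⟨a2, b2⟩ := ih2 h2
      constructor <;> intro hc <;>
        simp only [ceval, Bool.and_eq_true, Bool.and_eq_false_iff] at hc
      · exact le_min (a1 hc.1) (a2 hc.2)
      · rcases hc with hc | hc
        · exact min_le_of_left_le (b1 hc)
        · exact min_le_of_right_le (b2 hc)
  | disj φ ψ ih1 ih2 =>
      obtain ⟨h1, h2⟩ := h
      obtain ⟨a1, b1⟩ := ih1 h1; obtain ⟨a2, b2⟩ := ih2 h2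
      constructor <;> intro hc <;>
        simp only [ceval, Bool.or_eq_true, Bool.or_eq_false_iff] at hc
      · rcases hc with hc | hc
        · exact le_max_of_le_left (a1 hc)
        · exact le_max_of_le_right (a2 hc)
      · exact max_le (b1 hc.1) (b2 hc.2)
  | neg φ ih =>
      obtain ⟨a1, b1⟩ := ih h
      constructor <;> intro hc <;>
        simp only [ceval, Bool.not_eq_true', Bool.not_eq_false'] at hc <;> simp only [feval]
      · linarith [b1 hc]
      · linarith [a1 hc]

/-- a constant-free formula is a classical tautology iff its fuzzy
value is at least `1/2` under every assignment of the atoms into `[0,1]`. -/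
theorem tautology_iff_fuzzy_ge_half {S : Type} (φ : Fml S) (hφ : ConstFree φ) :
    (∀ v : S → Bool, ceval v φ = true) ↔
    (∀ w : S → ℝ, (∀ s, w s ∈ Set.Icc (0:ℝ) 1) → 1/2 ≤ feval w φ) := by
  constructor
  · intro h w hw
    have := (feval_half w φ hφ).1 (h _)
    exact this
  · intro h v
    have hw : ∀ s, (if v s then (1:ℝ) else 0) ∈ Set.Icc (0:ℝ) 1 := by
      intro s; rcases v s <;> simp
    have := h _ hw
    rw [feval_indicator v φ hφ] at this
    by_contra hc
    simp [hc] at this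
    linarith
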